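/- Let 0 ≤ α ≤ 1 and 0 < θ ≤ π/4, write c = cos θ, s = sin θ, A = (1+α)/2, B = (1−α)/2, and let ρ_{α,θ} be the 4×4 complex matrix with diagonal entries Ac², Bc², Bs², As² (in the basis |00⟩, |01⟩, |10⟩, |11⟩) and off-diagonal entries αcs at positions (|00⟩,|11⟩) and (|11⟩,|00⟩), all other entries zero. Let ρ^{T_B} denote its partial transpose on the second qubit, defined entrywise by ρ^{T_B}[(a,b),(a',b')] = ρ[(a,b'),(a',b)]. Then ρ^{T_B} is positive semidefinite if and only if α ≤ 1/3. -/

import Mathlib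

open Matrix
open scoped ComplexOrder

noncomputable section

set_option maxHeartbeats 2000000 in
/-- For `0 ≤ α ≤ 1` and `0 < θ ≤ π/4`, the partial transpose (on the second
qubit) of the state `ρ_{α,θ}` (given as the 4×4 matrix with diagonal `Ac², Bc², Bs², As²` and
corner entries `αcs`) is positive semidefinite if and only if `α ≤ 1/3`. -/
theorem stmt6 (α θ : ℝ) (hα0 : 0 ≤ α) (hα1 : α ≤ 1)
    (hθ0 : 0 < θ) (hθ : θ ≤ Real.pi / 4) :
    let c : ℝ := Real.cos θ
    let s : ℝ := Real.sin θ
    let A : ℝ := (1 + α) / 2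
    let B : ℝ := (1 - α) / 2
    let ρ : Matrix (Fin 2 × Fin 2) (Fin 2 × Fin 2) ℂ :=
      Matrix.of (fun p q : Fin 2 × Fin 2 =>
        if p = (0, 0) ∧ q = (0, 0) then ((A * c ^ 2 : ℝ) : ℂ)
        else if p = (0, 1) ∧ q = (0, 1) then ((B * c ^ 2 : ℝ) : ℂ)
        else if p = (1, 0) ∧ q = (1, 0) then ((B * s ^ 2 : ℝ) : ℂ)
        else if p = (1, 1) ∧ q = (1, 1) then ((A * s ^ 2 : ℝ) : ℂ)
        else if (p = (0, 0) ∧ q = (1, 1)) ∨ (p = (1, 1) ∧ q = (0, 0)) then ((α * c * s : ℝ) : ℂ)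
        else 0)
    -- partial transpose on the second qubit: ρ^{T_B}[(a,b),(a',b')] = ρ[(a,b'),(a',b)]
    let ρTB : Matrix (Fin 2 × Fin 2) (Fin 2 × Fin 2) ℂ :=
      Matrix.of fun p q : Fin 2 × Fin 2 => ρ (p.1, q.2) (q.1, p.2)
    (ρTB.PosSemidef ↔ α ≤ 1 / 3) := by
  intro c s A B ρ ρTB
  have hpi := Real.pi_pos
  have hc : 0 < c := Real.cos_pos_of_mem_Ioo ⟨by linarith, by linarith⟩
  have hs : 0 < s := Real.sin_pos_of_pos_of_lt_pi hθ0 (by linarith)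
  have hBdef : B = (1 - α) / 2 := rfl
  have hAdef : A = (1 + α) / 2 := rfl
  constructor
  · intro h
    have key := h.dotProduct_mulVec_nonneg (fun p : Fin 2 × Fin 2 => if p = (0,1) then (s:ℂ) else if p = (1,0) then (-(c:ℂ)) else 0)
    simp only [dotProduct, Matrix.mulVec, Fintype.sum_prod_type, Fin.sum_univ_two,
      Matrix.of_apply, ρTB, ρ, Pi.star_apply] at key
    norm_num [Prod.ext_iff] at key
    have key' : c * (α * c * s * s + -(B * s ^ 2 * c)) ≤ s * (B * c ^ 2 * s + -(α * c * s * c)) := by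
      exact_mod_cast key
    nlinarith [mul_pos (mul_pos hc hc) (mul_pos hs hs)]
  · intro hα
    have hA : (0:ℝ) ≤ A := by rw [hAdef]; linarith
    have hB : α ≤ B := by rw [hBdef]; linarith
    refine Matrix.posSemidef_iff_dotProduct_mulVec.mpr ⟨?_, ?_⟩
    · ext p q
      fin_cases p <;> fin_cases q <;>
        simp [ρTB, ρ, Matrix.conjTranspose_apply, Complex.conj_ofReal, Prod.ext_iff]
    · intro x
      simp only [dotProduct, Matrix.mulVec, Fintype.sum_prod_type, Fin.sum_univ_two,
        Matrix.of_apply, ρTB, ρ, Pi.star_apply]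
      norm_num [Prod.ext_iff]
      rw [Complex.le_def]
      constructor
      · simp only [Complex.add_re, Complex.mul_re, Complex.mul_im, Complex.add_im,
          Complex.ofReal_re, Complex.ofReal_im, Complex.conj_re, Complex.conj_im,
          Complex.zero_re, pow_two, Complex.ofReal_mul]
        ring_nf
        nlinarith [mul_nonneg hα0 (sq_nonneg (c*(x (0,1)).re + s*(x (1,0)).re)),
          mul_nonneg hα0 (sq_nonneg (c*(x (0,1)).im + s*(x (1,0)).im)),
          mul_nonneg (by linarith : (0:ℝ) ≤ B - α) (sq_nonneg (c*(x (0,1)).re)),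
          mul_nonneg (by linarith : (0:ℝ) ≤ B - α) (sq_nonneg (c*(x (0,1)).im)),
          mul_nonneg (by linarith : (0:ℝ) ≤ B - α) (sq_nonneg (s*(x (1,0)).re)),
          mul_nonneg (by linarith : (0:ℝ) ≤ B - α) (sq_nonneg (s*(x (1,0)).im)),
          mul_nonneg hA (sq_nonneg (c*(x (0,0)).re)), mul_nonneg hA (sq_nonneg (c*(x (0,0)).im)),
          mul_nonneg hA (sq_nonneg (s*(x (1,1)).re)), mul_nonneg hA (sq_nonneg (s*(x (1,1)).im))]
      · simp only [Complex.add_im, Complex.mul_im, Complex.mul_re, Complex.add_re,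
          Complex.ofReal_re, Complex.ofReal_im, Complex.conj_re, Complex.conj_im,
          Complex.zero_im, pow_two]
        ring

end
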